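/- Let P_F be the pattern for a 3-CNF formula F over variables V and let T be a DTAS with at most m = |C(P_F)| + 3 tile types which self-assembles P_F. Then for every variable v ∈ V there is a unique tile type t_v⁺ ∈ T with color labelled v and a unique tile type t_v⁻ ∈ T with color labelled ¬v, and either t_v⁺(N) = 1 and t_v⁻(N) = 0, or t_v⁺(N) = 0 and t_v⁻(N) = 1, where 0 and 1 are the two south-input glues of the four OR-gate tile types of T. -/

import Mathlib

/-- A colored Wang tile with a color and four glues (north, east, south, west). -/
structure Tile (C G : Type) where
  color : C
  north : G
  east : G
  south : G
  west : G
deriving DecidableEq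

/-- A rectilinear tile assembly system: a finite set of tile types together with
an L-shaped seed, given by its north glues (bottom arm) and east glues (left arm). -/
structure RTAS (C G : Type) where
  tiles : Finset (Tile C G)
  seedN : ℕ → G
  seedE : ℕ → G

/-- A tile assignment for the `M × N` rectangle spanned by the seed:
every tile belongs to the system, west/south glues match the east/north glues of the
west/south neighbours, and the seed glues on the boundary. -/
def IsAssignment {C G : Type} (T : RTAS C G) (M N : ℕ) (f : ℕ → ℕ → Tile C G) : Prop :=
  (∀ x < M, ∀ y < N, f x y ∈ T.tiles) ∧
  (∀ y < N, (f 0 y).west = T.seedE y) ∧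
  (∀ x < M, (f x 0).south = T.seedN x) ∧
  (∀ x, x + 1 < M → ∀ y < N, (f (x + 1) y).west = (f x y).east) ∧
  (∀ x < M, ∀ y, y + 1 < N → (f x (y + 1)).south = (f x y).north)

/-- `T` self-assembles the `M × N` pattern `P` if some tile assignment realizes `P`. -/
def SelfAssembles {C G : Type} (T : RTAS C G) (M N : ℕ) (P : ℕ → ℕ → C) : Prop :=
  ∃ f, IsAssignment T M N f ∧ ∀ x < M, ∀ y < N, (f x y).color = P x y

/-- A directed RTAS: distinct tile types differ in their south or west glue. -/
def DirectedTAS {C G : Type} (T : RTAS C G) : Prop :=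
  ∀ t₁ ∈ T.tiles, ∀ t₂ ∈ T.tiles, t₁ ≠ t₂ → t₁.south ≠ t₂.south ∨ t₁.west ≠ t₂.west

/-- The set of colors occurring in the `M × N` pattern `P`. -/
def colorsOf {C : Type} [DecidableEq C] (M N : ℕ) (P : ℕ → ℕ → C) : Finset C :=
  (Finset.range M ×ˢ Finset.range N).image fun q => P q.1 q.2

/-- The named colors used in the subpatterns of the pattern `P_F` of the paper.
`uniq n` are the "unique" filler colors. -/
inductive PColor where
  | orC | plus | minus
  | Z1 | Z2 | Z3 | Z4
  | aC | bW | bD | cW | cD | dC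
  | arrW (w : Fin 2)
  | arrD (w : Fin 2)
  | upW (s : Fin 2)
  | upD (s : Fin 2)
  | gate (i : Fin 4)
  | X (i : Fin 8)
  | Y (i : Fin 8)
  | varW (v : ℕ)
  | negW (v : ℕ)
  | varAux (v : ℕ)
  | varMod (v : ℕ)
  | varModd (v : ℕ)
  | uniq (n : ℕ)
deriving DecidableEq

/-- The `16 × 2` subpattern `p`: eight `2 × 2` blocks, block `i` having colors
`Xᵢ` (bottom-left), `OR` (bottom-right, top-left) and `Yᵢ` (top-right). -/
def pPat : ℕ → ℕ → PColor := fun x y =>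
  if y = 0 then
    if x % 2 = 0 then PColor.X ⟨x / 2 % 8, Nat.mod_lt _ (by norm_num)⟩ else PColor.orC
  else
    if x % 2 = 0 then PColor.orC else PColor.Y ⟨x / 2 % 8, Nat.mod_lt _ (by norm_num)⟩

/-- The `4 × 4` subpatterns `q₁, …, q₄` (index `idx = 0, …, 3`), with west input
`w = idx / 2` and south input `s = idx % 2` feeding an `OR`-colored position. -/
def qPat (idx : Fin 4) : ℕ → ℕ → PColor := fun x y =>
  let wv : Fin 2 := ⟨idx.val / 2, by have := idx.isLt; omega⟩
  let sv : Fin 2 := ⟨idx.val % 2, Nat.mod_lt _ (by norm_num)⟩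
  match x, y with
  | 0, 0 => PColor.Z1
  | 1, 0 => PColor.Z2
  | 2, 0 => PColor.upD sv
  | 3, 0 => PColor.bD
  | 0, 1 => PColor.Z3
  | 1, 1 => PColor.aC
  | 2, 1 => PColor.upW sv
  | 3, 1 => PColor.bW
  | 0, 2 => PColor.arrD wv
  | 1, 2 => PColor.arrW wv
  | 2, 2 => PColor.orC
  | 3, 2 => if idx.val = 0 then PColor.minus else PColor.plus
  | 0, 3 => PColor.cD
  | 1, 3 => PColor.cW
  | 2, 3 => PColor.gate idx
  | _, _ => PColor.dC

/-- The `6 × 3` subpattern `q₅`: bottom row `a ↑₀ ↑₁ ↑₀ ↑₁ b`, middle row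
`→₀ OR OR OR OR +`, top row `c A B C D d`. -/
def q5Pat : ℕ → ℕ → PColor := fun x y =>
  match y, x with
  | 0, 0 => PColor.aC
  | 0, 1 => PColor.upW 0
  | 0, 2 => PColor.upW 1
  | 0, 3 => PColor.upW 0
  | 0, 4 => PColor.upW 1
  | 0, _ => PColor.bW
  | 1, 0 => PColor.arrW 0
  | 1, 5 => PColor.plus
  | 1, _ => PColor.orC
  | 2, 0 => PColor.cW
  | 2, 1 => PColor.gate 0
  | 2, 2 => PColor.gate 1
  | 2, 3 => PColor.gate 2
  | 2, 4 => PColor.gate 3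
  | _, _ => PColor.dC

/-- A literal: a variable index together with its sign (`true` = positive). -/
abbrev Lit := ℕ × Bool

/-- A clause with three literals. -/
abbrev Clause3 := Lit × Lit × Lit

/-- A boolean formula in 3-CNF over the variables `0, …, numVars - 1`. -/
structure CNF3 where
  numVars : ℕ
  clauses : List Clause3
  wf : ∀ cl ∈ clauses, cl.1.1 < numVars ∧ cl.2.1.1 < numVars ∧ cl.2.2.1 < numVars

/-- Value of a literal under a variable assignment. -/
def litVal (f : ℕ → Bool) (l : Lit) : Bool := if l.2 then f l.1 else ! f l.1

/-- A 3-CNF formula is satisfiable if some assignment makes every clause true. -/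
def CNF3.Satisfiable (F : CNF3) : Prop :=
  ∃ f : ℕ → Bool, ∀ cl ∈ F.clauses,
    (litVal f cl.1 || litVal f cl.2.1 || litVal f cl.2.2) = true

/-- The `2 × 2` subpattern `r₁(v)`. -/
def r1Pat (v : ℕ) : ℕ → ℕ → PColor := fun x y =>
  match x, y with
  | 0, 0 => PColor.Z4
  | 1, 0 => PColor.varW v
  | 0, 1 => PColor.varAux v
  | _, _ => PColor.varMod v

/-- The `2 × 2` subpattern `r₂(v)`. -/
def r2Pat (v : ℕ) : ℕ → ℕ → PColor := fun x y =>
  match x, y with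
  | 0, 0 => PColor.Z4
  | 1, 0 => PColor.negW v
  | 0, 1 => PColor.varAux v
  | _, _ => PColor.varModd v

/-- The `4 × 2` subpattern `r₃(v)`: bottom row `a v ¬v b`, top row `→₀ OR OR +`. -/
def r3Pat (v : ℕ) : ℕ → ℕ → PColor := fun x y =>
  match y, x with
  | 0, 0 => PColor.aC
  | 0, 1 => PColor.varW v
  | 0, 2 => PColor.negW v
  | 0, _ => PColor.bW
  | 1, 0 => PColor.arrW 0
  | 1, 3 => PColor.plus
  | _, _ => PColor.orC

/-- The color of a literal. -/
def litColor (l : Lit) : PColor := if l.2 then PColor.varW l.1 else PColor.negW l.1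

/-- The `5 × 2` subpattern `s(C)` for a clause `C = (c₁ ∨ c₂ ∨ c₃)`:
bottom row `a c₁ c₂ c₃ b`, top row `→₀ OR OR OR +`. -/
def sPat (cl : Clause3) : ℕ → ℕ → PColor := fun x y =>
  match y, x with
  | 0, 0 => PColor.aC
  | 0, 1 => litColor cl.1
  | 0, 2 => litColor cl.2.1
  | 0, 3 => litColor cl.2.2
  | 0, _ => PColor.bW
  | 1, 0 => PColor.arrW 0
  | 1, 4 => PColor.plus
  | _, _ => PColor.orC

/-- A rectangular block: width, height and contents. -/
abbrev PBlock := ℕ × ℕ × (ℕ → ℕ → PColor)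

/-- The list of subpatterns of `P_F`: `p`, `q₁, …, q₅`, then `r₁(v), r₂(v), r₃(v)`
for every variable `v`, then `s(C)` for every clause `C`. -/
def blocksOf (F : CNF3) : List PBlock :=
  [(16, 2, pPat), (4, 4, qPat 0), (4, 4, qPat 1), (4, 4, qPat 2), (4, 4, qPat 3),
    (6, 3, q5Pat)]
    ++ (List.range F.numVars).flatMap
        (fun v => [(2, 2, r1Pat v), (2, 2, r2Pat v), (4, 2, r3Pat v)])
    ++ F.clauses.map (fun cl => (5, 2, sPat cl))

/-- Place the blocks side by side (starting at column `x0`, occupying rows `1, …, h`),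
with one column of unique colors before each block and after the last one; all the
remaining positions carry unique colors (`uniq` of the position code). -/
def place : List PBlock → ℕ → ℕ → ℕ → PColor
  | [], _, x, y => PColor.uniq (Nat.pair x y)
  | b :: bs, x0, x, y =>
      if x0 ≤ x ∧ x < x0 + b.1 ∧ 1 ≤ y ∧ y < 1 + b.2.1 then
        b.2.2 (x - x0) (y - 1)
      else if x < x0 + b.1 + 1 then PColor.uniq (Nat.pair x y)
      else place bs (x0 + b.1 + 1) x y

/-- The pattern `P_F` of the paper, of height `6` and width `45 + 11·|V| + 6·ℓ`. -/
def patF (F : CNF3) : ℕ → ℕ → PColor := fun x y => place (blocksOf F) 1 x y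

/-- The width of the pattern `P_F`. -/
def widthF (F : CNF3) : ℕ := 45 + 11 * F.numVars + 6 * F.clauses.length

def sizeL (L : List PBlock) : ℕ := (L.map fun b => b.1 + 1).sum

lemma sizeL_cons (b : PBlock) (L : List PBlock) : sizeL (b :: L) = b.1 + 1 + sizeL L := by
  simp [sizeL]

lemma sizeL_append (L1 L2 : List PBlock) : sizeL (L1 ++ L2) = sizeL L1 + sizeL L2 := by
  simp [sizeL]

lemma place_hit (b : PBlock) (bs : List PBlock) (x0 x y : ℕ)
    (h1 : x0 ≤ x) (h2 : x < x0 + b.1) (h3 : 1 ≤ y) (h4 : y < 1 + b.2.1) :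
    place (b :: bs) x0 x y = b.2.2 (x - x0) (y - 1) := by
  rw [place, if_pos ⟨h1, h2, h3, h4⟩]

lemma place_skip (b : PBlock) (bs : List PBlock) (x0 x y : ℕ)
    (h : x0 + b.1 + 1 ≤ x) :
    place (b :: bs) x0 x y = place bs (x0 + b.1 + 1) x y := by
  rw [place, if_neg (by omega), if_neg (by omega)]

lemma place_append_skip (L1 L2 : List PBlock) (x0 x y : ℕ)
    (h : x0 + sizeL L1 ≤ x) :
    place (L1 ++ L2) x0 x y = place L2 (x0 + sizeL L1) x y := by
  induction L1 generalizing x0 with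
  | nil => simp [sizeL]
  | cons b L ih =>
      rw [sizeL_cons] at h
      rw [List.cons_append, place_skip _ _ _ _ _ (by omega), ih _ (by omega), sizeL_cons]
      ring_nf

lemma patF_p (F : CNF3) (x y : ℕ) (hx1 : 1 ≤ x) (hx2 : x < 17) (hy1 : 1 ≤ y) (hy2 : y < 3) :
    patF F x y = pPat (x - 1) (y - 1) := by
  show place (blocksOf F) 1 x y = _
  rw [blocksOf]
  simp only [List.append_assoc, List.cons_append]
  rw [place_hit _ _ _ _ _ hx1 (by show x < 1 + 16; omega) hy1 (by show y < 1 + 2; omega)]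

lemma patF_q0 (F : CNF3) (x y : ℕ) (hx1 : 18 ≤ x) (hx2 : x < 22) (hy1 : 1 ≤ y) (hy2 : y < 5) :
    patF F x y = qPat 0 (x - 18) (y - 1) := by
  show place (blocksOf F) 1 x y = _
  rw [blocksOf]
  simp only [List.append_assoc, List.cons_append]
  rw [place_skip _ _ _ _ _ (by show 1 + 16 + 1 ≤ x; omega)]
  rw [place_hit _ _ _ _ _ (by show 1 + 16 + 1 ≤ x; omega) (by show x < 1 + 16 + 1 + 4; omega)
    hy1 (by show y < 1 + 4; omega)]
  norm_num

lemma patF_q1 (F : CNF3) (x y : ℕ) (hx1 : 23 ≤ x) (hx2 : x < 27) (hy1 : 1 ≤ y) (hy2 : y < 5) :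
    patF F x y = qPat 1 (x - 23) (y - 1) := by
  show place (blocksOf F) 1 x y = _
  rw [blocksOf]
  simp only [List.append_assoc, List.cons_append]
  rw [place_skip _ _ _ _ _ (by show 1 + 16 + 1 ≤ x; omega)]
  rw [place_skip _ _ _ _ _ (by show 1 + 16 + 1 + 4 + 1 ≤ x; omega)]
  rw [place_hit _ _ _ _ _ (by show 1 + 16 + 1 + 4 + 1 ≤ x; omega)
    (by show x < 1 + 16 + 1 + 4 + 1 + 4; omega) hy1 (by show y < 1 + 4; omega)]
  norm_num

lemma patF_q2 (F : CNF3) (x y : ℕ) (hx1 : 28 ≤ x) (hx2 : x < 32) (hy1 : 1 ≤ y) (hy2 : y < 5) :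
    patF F x y = qPat 2 (x - 28) (y - 1) := by
  show place (blocksOf F) 1 x y = _
  rw [blocksOf]
  simp only [List.append_assoc, List.cons_append]
  rw [place_skip _ _ _ _ _ (by show 1 + 16 + 1 ≤ x; omega)]
  rw [place_skip _ _ _ _ _ (by show 1 + 16 + 1 + 4 + 1 ≤ x; omega)]
  rw [place_skip _ _ _ _ _ (by show 1 + 16 + 1 + 4 + 1 + 4 + 1 ≤ x; omega)]
  rw [place_hit _ _ _ _ _ (by show 1 + 16 + 1 + 4 + 1 + 4 + 1 ≤ x; omega)
    (by show x < 1 + 16 + 1 + 4 + 1 + 4 + 1 + 4; omega) hy1 (by show y < 1 + 4; omega)]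
  norm_num

lemma patF_q3 (F : CNF3) (x y : ℕ) (hx1 : 33 ≤ x) (hx2 : x < 37) (hy1 : 1 ≤ y) (hy2 : y < 5) :
    patF F x y = qPat 3 (x - 33) (y - 1) := by
  show place (blocksOf F) 1 x y = _
  rw [blocksOf]
  simp only [List.append_assoc, List.cons_append]
  rw [place_skip _ _ _ _ _ (by show 1 + 16 + 1 ≤ x; omega)]
  rw [place_skip _ _ _ _ _ (by show 1 + 16 + 1 + 4 + 1 ≤ x; omega)]
  rw [place_skip _ _ _ _ _ (by show 1 + 16 + 1 + 4 + 1 + 4 + 1 ≤ x; omega)]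
  rw [place_skip _ _ _ _ _ (by show 1 + 16 + 1 + 4 + 1 + 4 + 1 + 4 + 1 ≤ x; omega)]
  rw [place_hit _ _ _ _ _ (by show 1 + 16 + 1 + 4 + 1 + 4 + 1 + 4 + 1 ≤ x; omega)
    (by show x < 1 + 16 + 1 + 4 + 1 + 4 + 1 + 4 + 1 + 4; omega) hy1 (by show y < 1 + 4; omega)]
  norm_num

def rBlocks (v : ℕ) : List PBlock := [(2, 2, r1Pat v), (2, 2, r2Pat v), (4, 2, r3Pat v)]

lemma sizeL_flatMap_r (n : ℕ) : sizeL ((List.range n).flatMap rBlocks) = 11 * n := by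
  induction n with
  | zero => simp [sizeL]
  | succ n ih =>
      rw [List.range_succ, List.flatMap_append, sizeL_append, ih]
      simp [rBlocks, sizeL]; ring

lemma blocksOf_split (F : CNF3) (v : ℕ) (hv : v < F.numVars) :
    ∃ L1 L2, blocksOf F = L1 ++ ((2, 2, r1Pat v) :: (2, 2, r2Pat v) :: (4, 2, r3Pat v) :: L2)
      ∧ sizeL L1 = 44 + 11 * v := by
  obtain ⟨m, hm⟩ : ∃ m, F.numVars = v + (m + 1) := ⟨F.numVars - v - 1, by omega⟩
  refine ⟨[(16, 2, pPat), (4, 4, qPat 0), (4, 4, qPat 1), (4, 4, qPat 2), (4, 4, qPat 3),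
    (6, 3, q5Pat)] ++ (List.range v).flatMap rBlocks,
    ((List.range m).map (fun i => v + 1 + i)).flatMap rBlocks
      ++ F.clauses.map (fun cl => (5, 2, sPat cl)), ?_, ?_⟩
  · rw [blocksOf, hm, List.range_add, List.flatMap_append]
    have : List.range (m + 1) = 0 :: List.map Nat.succ (List.range m) :=
      List.range_succ_eq_map
    rw [this]
    simp only [List.map_cons, List.flatMap_cons, List.map_map, List.append_assoc]
    have h2 : (List.map (fun x => v + Nat.succ x) (List.range m)).flatMap rBlocks
        = ((List.range m).map (fun i => v + 1 + i)).flatMap rBlocks := by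
      congr 1
      congr 1
      funext i; omega
    rw [← h2]
    rfl
  · rw [sizeL_append, sizeL_flatMap_r]
    simp [sizeL]

lemma patF_r1 (F : CNF3) (v : ℕ) (hv : v < F.numVars) (x y : ℕ)
    (hx1 : 45 + 11 * v ≤ x) (hx2 : x < 47 + 11 * v) (hy1 : 1 ≤ y) (hy2 : y < 3) :
    patF F x y = r1Pat v (x - (45 + 11 * v)) (y - 1) := by
  obtain ⟨L1, L2, hL, hs⟩ := blocksOf_split F v hv
  show place (blocksOf F) 1 x y = _
  rw [hL, place_append_skip _ _ _ _ _ (by omega), hs]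
  have h1 : 1 + (44 + 11 * v) = 45 + 11 * v := by omega
  rw [h1, place_hit _ _ _ _ _ hx1 (by show x < 45 + 11 * v + 2; omega) hy1
    (by show y < 1 + 2; omega)]

lemma patF_r2 (F : CNF3) (v : ℕ) (hv : v < F.numVars) (x y : ℕ)
    (hx1 : 48 + 11 * v ≤ x) (hx2 : x < 50 + 11 * v) (hy1 : 1 ≤ y) (hy2 : y < 3) :
    patF F x y = r2Pat v (x - (48 + 11 * v)) (y - 1) := by
  obtain ⟨L1, L2, hL, hs⟩ := blocksOf_split F v hv
  show place (blocksOf F) 1 x y = _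
  rw [hL, place_append_skip _ _ _ _ _ (by omega), hs]
  have h1 : 1 + (44 + 11 * v) = 45 + 11 * v := by omega
  rw [h1, place_skip _ _ _ _ _ (by show 45 + 11 * v + 2 + 1 ≤ x; omega)]
  have h2 : 45 + 11 * v + 2 + 1 = 48 + 11 * v := by omega
  rw [h2, place_hit _ _ _ _ _ hx1 (by show x < 48 + 11 * v + 2; omega) hy1
    (by show y < 1 + 2; omega)]

lemma patF_r3 (F : CNF3) (v : ℕ) (hv : v < F.numVars) (x y : ℕ)
    (hx1 : 51 + 11 * v ≤ x) (hx2 : x < 55 + 11 * v) (hy1 : 1 ≤ y) (hy2 : y < 3) :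
    patF F x y = r3Pat v (x - (51 + 11 * v)) (y - 1) := by
  obtain ⟨L1, L2, hL, hs⟩ := blocksOf_split F v hv
  show place (blocksOf F) 1 x y = _
  rw [hL, place_append_skip _ _ _ _ _ (by omega), hs]
  have h1 : 1 + (44 + 11 * v) = 45 + 11 * v := by omega
  rw [h1, place_skip _ _ _ _ _ (by show 45 + 11 * v + 2 + 1 ≤ x; omega)]
  have h2 : 45 + 11 * v + 2 + 1 = 48 + 11 * v := by omega
  rw [h2, place_skip _ _ _ _ _ (by show 48 + 11 * v + 2 + 1 ≤ x; omega)]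
  have h3 : 48 + 11 * v + 2 + 1 = 51 + 11 * v := by omega
  rw [h3, place_hit _ _ _ _ _ hx1 (by show x < 51 + 11 * v + 4; omega) hy1
    (by show y < 1 + 2; omega)]

lemma slack_bound {α β : Type} [DecidableEq α] [DecidableEq β] (U : Finset α) (col : α → β)
    (hU : U.card ≤ (U.image col).card + 3) (S : Finset β) (hS : S ⊆ U.image col) :
    ∑ c ∈ S, (U.filter fun t => col t = c).card ≤ S.card + 3 := by
  have h1 : ∑ c ∈ U.image col, (U.filter fun t => col t = c).card = U.card :=
    (Finset.card_eq_sum_card_image col U).symm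
  have h2 : ∑ c ∈ U.image col \ S, (U.filter fun t => col t = c).card
      + ∑ c ∈ S, (U.filter fun t => col t = c).card
      = ∑ c ∈ U.image col, (U.filter fun t => col t = c).card :=
    Finset.sum_sdiff hS
  have h3 : (U.image col \ S).card ≤ ∑ c ∈ U.image col \ S, (U.filter fun t => col t = c).card := by
    rw [Finset.card_eq_sum_ones]
    apply Finset.sum_le_sum
    intro c hc
    have hc' : c ∈ U.image col := (Finset.sdiff_subset) hc
    obtain ⟨t, ht, rfl⟩ := Finset.mem_image.mp hc'
    have : t ∈ U.filter fun s => col s = col t := Finset.mem_filter.mpr ⟨ht, rfl⟩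
    exact Finset.card_pos.mpr ⟨t, this⟩
  have h4 : (U.image col \ S).card = (U.image col).card - S.card := Finset.card_sdiff_of_subset hS
  have h5 : S.card ≤ (U.image col).card := Finset.card_le_card hS
  omega

lemma card_image_add_le {α β : Type} [DecidableEq α] [DecidableEq β] (U : Finset α) (col : α → β)
    (c0 : β) (hc0 : c0 ∈ U.image col) (h4 : 4 ≤ (U.filter fun t => col t = c0).card) :
    (U.image col).card + 3 ≤ U.card := by
  have h1 := Finset.card_eq_sum_card_image col U
  have hsub : ({c0} : Finset β) ⊆ U.image col := by simpa using hc0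
  have h2 := Finset.sum_sdiff (f := fun c => (U.filter fun t => col t = c).card) hsub
  rw [Finset.sum_singleton] at h2
  beta_reduce at h2
  have h3 : (U.image col \ {c0}).card
      ≤ ∑ c ∈ U.image col \ {c0}, (U.filter fun t => col t = c).card := by
    rw [Finset.card_eq_sum_ones]; apply Finset.sum_le_sum; intro c hc
    have hc' : c ∈ U.image col := Finset.sdiff_subset hc
    obtain ⟨t, ht, rfl⟩ := Finset.mem_image.mp hc'
    exact Finset.card_pos.mpr ⟨t, Finset.mem_filter.mpr ⟨ht, rfl⟩⟩
  have h4' := Finset.card_sdiff_of_subset hsub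
  have h5 : ({c0} : Finset β).card = 1 := rfl
  omega

/-- All tiles of `U` with color `c` coincide. -/
def UniqColor {G : Type} (U : Finset (Tile PColor G)) (c : PColor) : Prop :=
  ∀ t ∈ U, ∀ t' ∈ U, t.color = c → t'.color = c → t = t'

lemma pPat_eval1 (i : ℕ) : pPat (2*i+1) 0 = PColor.orC := by
  have h : (2*i+1) % 2 = 1 := by omega
  simp [pPat, h]

lemma pPat_eval2 (i : ℕ) : pPat (2*i) 1 = PColor.orC := by
  have h : (2*i) % 2 = 0 := by omega
  simp [pPat, h]

lemma pPat_eval3 (i : ℕ) (hi : i < 8) : pPat (2*i+1) 1 = PColor.Y ⟨i, hi⟩ := by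
  have h : (2*i+1) % 2 = 1 := by omega
  have h2 : (2*i+1)/2 % 8 = i := by omega
  simp [pPat, h, h2]

/-- Lemma on the subpatterns `r₁(v), r₂(v), r₃(v)`: if `T` is a DTAS with at most
`m = |C(P_F)| + 3` tile types which self-assembles `P_F`, then (with `0` and `1`
the two south-input glues of the four OR-gate tile types of `T`) for every
variable `v` there is a unique tile type `t_v⁺` with color `v` and a unique tile
type `t_v⁻` with color `¬v`, and either `t_v⁺(N) = 1` and `t_v⁻(N) = 0`, or
`t_v⁺(N) = 0` and `t_v⁻(N) = 1`. -/
theorem variable_tiles_of_subpatterns_r {G : Type} [DecidableEq G]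
    (F : CNF3) (T : RTAS PColor G)
    (hD : DirectedTAS T)
    (hcard : T.tiles.card ≤ (colorsOf (widthF F) 6 (patF F)).card + 3)
    (hSA : SelfAssembles T (widthF F) 6 (patF F)) :
    ∃ z o : G, z ≠ o ∧
      -- z and o are the south-input glues of the OR-gate tile types of T
      (∀ t ∈ T.tiles, t.color = PColor.orC → t.south = z ∨ t.south = o) ∧
      (∃ t ∈ T.tiles, t.color = PColor.orC ∧ t.south = z) ∧
      (∃ t ∈ T.tiles, t.color = PColor.orC ∧ t.south = o) ∧
      ∀ v < F.numVars, ∃ tp tn : Tile PColor G,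
        tp ∈ T.tiles ∧ tp.color = PColor.varW v ∧
        (∀ t ∈ T.tiles, t.color = PColor.varW v → t = tp) ∧
        tn ∈ T.tiles ∧ tn.color = PColor.negW v ∧
        (∀ t ∈ T.tiles, t.color = PColor.negW v → t = tn) ∧
        ((tp.north = o ∧ tn.north = z) ∨ (tp.north = z ∧ tn.north = o)) := by
  classical
  obtain ⟨f, ⟨hmem, -, -, hW, hN⟩, hcol⟩ := hSA
  have hM : 45 ≤ widthF F := by unfold widthF; omega
  set U : Finset (Tile PColor G) :=
    (Finset.range (widthF F) ×ˢ Finset.range 6).image (fun q => f q.1 q.2) with hUdef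
  have hfU : ∀ x y, x < widthF F → y < 6 → f x y ∈ U := by
    intro x y hx hy
    exact Finset.mem_image.mpr ⟨(x, y), by simp [Finset.mem_product, hx, hy], rfl⟩
  have hUsub : U ⊆ T.tiles := by
    intro t ht
    obtain ⟨q, hq, rfl⟩ := Finset.mem_image.mp ht
    simp only [Finset.mem_product, Finset.mem_range] at hq
    exact hmem q.1 hq.1 q.2 hq.2
  have hc : ∀ x y, x < widthF F → y < 6 → (f x y).color = patF F x y :=
    fun x y hx hy => hcol x hx y hy
  have hcolU : colorsOf (widthF F) 6 (patF F) = U.image Tile.color := by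
    rw [hUdef, Finset.image_image, colorsOf]
    apply Finset.image_congr
    intro q hq
    simp only [Finset.coe_product, Set.mem_prod, Finset.mem_coe, Finset.mem_range] at hq
    exact (hc q.1 q.2 hq.1 hq.2).symm
  have hUcard3 : U.card ≤ (U.image Tile.color).card + 3 := by
    calc U.card ≤ T.tiles.card := Finset.card_le_card hUsub
    _ ≤ _ := by rw [← hcolU]; exact hcard
  have hslack := slack_bound U Tile.color hUcard3
  have hdet : ∀ t₁ ∈ T.tiles, ∀ t₂ ∈ T.tiles, t₁.south = t₂.south → t₁.west = t₂.west →
      t₁ = t₂ := by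
    intro t₁ h₁ t₂ h₂ hs hw
    by_contra hne
    rcases hD t₁ h₁ t₂ h₂ hne with h | h <;> exact h (by assumption)
  have hdetU : ∀ t₁ ∈ U, ∀ t₂ ∈ U, t₁.south = t₂.south → t₁.west = t₂.west → t₁ = t₂ :=
    fun t₁ h₁ t₂ h₂ => hdet t₁ (hUsub h₁) t₂ (hUsub h₂)
  have hSo : ∀ x y, x < widthF F → y < 5 → (f x (y+1)).south = (f x y).north :=
    fun x y hx hy => hN x hx y (by omega)
  have hWe : ∀ x y, x + 1 < widthF F → y < 6 → (f (x+1) y).west = (f x y).east :=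
    fun x y hx hy => hW x hx y hy
  have hpair : ∀ (c : PColor) (t t' : Tile PColor G), t ∈ U → t' ∈ U → t.color = c →
      t'.color = c → t ≠ t' → 2 ≤ (U.filter (fun s => s.color = c)).card := by
    intro c t t' ht ht' hct hct' hne
    have hsub2 : ({t, t'} : Finset (Tile PColor G)) ⊆ U.filter (fun s => s.color = c) := by
      intro s hs
      simp only [Finset.mem_insert, Finset.mem_singleton] at hs
      rcases hs with rfl | rfl
      · exact Finset.mem_filter.mpr ⟨ht, hct⟩
      · exact Finset.mem_filter.mpr ⟨ht', hct'⟩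
    calc 2 = ({t, t'} : Finset (Tile PColor G)).card := (Finset.card_pair hne).symm
    _ ≤ _ := Finset.card_le_card hsub2
  have hcard4 : ∀ t0 t1 t2 t3 : Tile PColor G,
      t0 ∈ U.filter (fun t => t.color = PColor.orC) →
      t1 ∈ U.filter (fun t => t.color = PColor.orC) →
      t2 ∈ U.filter (fun t => t.color = PColor.orC) →
      t3 ∈ U.filter (fun t => t.color = PColor.orC) →
      t0 ≠ t1 → t0 ≠ t2 → t0 ≠ t3 → t1 ≠ t2 → t1 ≠ t3 → t2 ≠ t3 →
      4 ≤ (U.filter (fun t => t.color = PColor.orC)).card := by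
    intro t0 t1 t2 t3 m0 m1 m2 m3 h01 h02 h03 h12 h13 h23
    have hsub4 : ({t0, t1, t2, t3} : Finset (Tile PColor G))
        ⊆ U.filter (fun t => t.color = PColor.orC) := by
      intro t ht
      simp only [Finset.mem_insert, Finset.mem_singleton] at ht
      rcases ht with rfl | rfl | rfl | rfl <;> assumption
    have hc4 : ({t0, t1, t2, t3} : Finset (Tile PColor G)).card = 4 := by
      rw [Finset.card_insert_of_notMem (by simp [h01, h02, h03]),
        Finset.card_insert_of_notMem (by simp [h12, h13]),
        Finset.card_insert_of_notMem (by simp [h23]), Finset.card_singleton]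
    calc 4 = ({t0, t1, t2, t3} : Finset (Tile PColor G)).card := hc4.symm
    _ ≤ _ := Finset.card_le_card hsub4
  have hp3 : 3 ≤ (U.filter (fun t => t.color = PColor.orC)).card := by
    have hBmem : ∀ i : Fin 8, f (2*i.val+2) 1 ∈ U.filter (fun t => t.color = PColor.orC) := by
      intro i
      refine Finset.mem_filter.mpr ⟨hfU _ _ (by have := i.isLt; omega) (by omega), ?_⟩
      rw [hc _ _ (by have := i.isLt; omega) (by omega),
        patF_p F _ _ (by omega) (by have := i.isLt; omega) (by omega) (by omega),
        show 2*i.val+2-1 = 2*i.val+1 from by omega, show (1:ℕ)-1 = 0 from by omega]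
      exact pPat_eval1 i.val
    have hCmem : ∀ i : Fin 8, f (2*i.val+1) 2 ∈ U.filter (fun t => t.color = PColor.orC) := by
      intro i
      refine Finset.mem_filter.mpr ⟨hfU _ _ (by have := i.isLt; omega) (by omega), ?_⟩
      rw [hc _ _ (by have := i.isLt; omega) (by omega),
        patF_p F _ _ (by omega) (by have := i.isLt; omega) (by omega) (by omega),
        show 2*i.val+1-1 = 2*i.val from by omega, show (2:ℕ)-1 = 1 from by omega]
      exact pPat_eval2 i.val
    have hYcol : ∀ i : Fin 8, (f (2*i.val+2) 2).color = PColor.Y ⟨i.val, i.isLt⟩ := by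
      intro i
      rw [hc _ _ (by have := i.isLt; omega) (by omega),
        patF_p F _ _ (by omega) (by have := i.isLt; omega) (by omega) (by omega),
        show 2*i.val+2-1 = 2*i.val+1 from by omega, show (2:ℕ)-1 = 1 from by omega]
      exact pPat_eval3 i.val i.isLt
    have hinj : Set.InjOn (fun i : Fin 8 => (f (2*i.val+2) 1, f (2*i.val+1) 2))
        ((Finset.univ : Finset (Fin 8)) : Set (Fin 8)) := by
      intro i _ j _ hij
      simp only [Prod.mk.injEq] at hij
      have hD1 : f (2*i.val+2) 2 = f (2*j.val+2) 2 := by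
        apply hdetU _ (hfU _ _ (by have := i.isLt; omega) (by omega))
          _ (hfU _ _ (by have := j.isLt; omega) (by omega))
        · rw [hSo _ 1 (by have := i.isLt; omega) (by omega),
            hSo _ 1 (by have := j.isLt; omega) (by omega), hij.1]
        · rw [hWe (2*i.val+1) 2 (by have := i.isLt; omega) (by omega),
            hWe (2*j.val+1) 2 (by have := j.isLt; omega) (by omega), hij.2]
      have := congrArg Tile.color hD1
      rw [hYcol i, hYcol j] at this
      simp only [PColor.Y.injEq, Fin.mk.injEq] at this
      exact Fin.ext this
    have h8 : (8:ℕ) ≤ ((U.filter (fun t => t.color = PColor.orC))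
        ×ˢ (U.filter (fun t => t.color = PColor.orC))).card := by
      have := Finset.card_le_card_of_injOn (fun i : Fin 8 => (f (2*i.val+2) 1, f (2*i.val+1) 2))
        (fun i _ => Finset.mem_product.mpr ⟨hBmem i, hCmem i⟩) hinj
      simpa using this
    rw [Finset.card_product] at h8
    by_contra hlt
    push_neg at hlt
    have : (U.filter (fun t => t.color = PColor.orC)).card
        * (U.filter (fun t => t.color = PColor.orC)).card ≤ 2 * 2 :=
      Nat.mul_le_mul (by omega) (by omega)
    omega
  have cu0 : (f 20 2).color = PColor.upW 0 := by
    rw [hc 20 2 (by omega) (by omega), patF_q0 F 20 2 (by omega) (by omega) (by omega) (by omega)]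
    decide
  have ca0 : (f 19 3).color = PColor.arrW 0 := by
    rw [hc 19 3 (by omega) (by omega), patF_q0 F 19 3 (by omega) (by omega) (by omega) (by omega)]
    decide
  have cO0 : (f 20 3).color = PColor.orC := by
    rw [hc 20 3 (by omega) (by omega), patF_q0 F 20 3 (by omega) (by omega) (by omega) (by omega)]
    decide
  have cb0 : (f 21 2).color = PColor.bW := by
    rw [hc 21 2 (by omega) (by omega), patF_q0 F 21 2 (by omega) (by omega) (by omega) (by omega)]
    decide
  have cpm0 : (f 21 3).color = PColor.minus := by
    rw [hc 21 3 (by omega) (by omega), patF_q0 F 21 3 (by omega) (by omega) (by omega) (by omega)]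
    decide
  have cw0 : (f 19 4).color = PColor.cW := by
    rw [hc 19 4 (by omega) (by omega), patF_q0 F 19 4 (by omega) (by omega) (by omega) (by omega)]
    decide
  have cg0 : (f 20 4).color = PColor.gate 0 := by
    rw [hc 20 4 (by omega) (by omega), patF_q0 F 20 4 (by omega) (by omega) (by omega) (by omega)]
    decide
  have sOu0 : (f 20 3).south = (f 20 2).north := hSo 20 2 (by omega) (by omega)
  have wOa0 : (f 20 3).west = (f 19 3).east := hWe 19 3 (by omega) (by omega)
  have wPO0 : (f 21 3).west = (f 20 3).east := hWe 20 3 (by omega) (by omega)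
  have sPb0 : (f 21 3).south = (f 21 2).north := hSo 21 2 (by omega) (by omega)
  have sgO0 : (f 20 4).south = (f 20 3).north := hSo 20 3 (by omega) (by omega)
  have wgw0 : (f 20 4).west = (f 19 4).east := hWe 19 4 (by omega) (by omega)
  have mO0 : f 20 3 ∈ U.filter (fun t => t.color = PColor.orC) :=
    Finset.mem_filter.mpr ⟨hfU 20 3 (by omega) (by omega), cO0⟩
  have cu1 : (f 25 2).color = PColor.upW 1 := by
    rw [hc 25 2 (by omega) (by omega), patF_q1 F 25 2 (by omega) (by omega) (by omega) (by omega)]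
    decide
  have ca1 : (f 24 3).color = PColor.arrW 0 := by
    rw [hc 24 3 (by omega) (by omega), patF_q1 F 24 3 (by omega) (by omega) (by omega) (by omega)]
    decide
  have cO1 : (f 25 3).color = PColor.orC := by
    rw [hc 25 3 (by omega) (by omega), patF_q1 F 25 3 (by omega) (by omega) (by omega) (by omega)]
    decide
  have cb1 : (f 26 2).color = PColor.bW := by
    rw [hc 26 2 (by omega) (by omega), patF_q1 F 26 2 (by omega) (by omega) (by omega) (by omega)]
    decide
  have cpm1 : (f 26 3).color = PColor.plus := by
    rw [hc 26 3 (by omega) (by omega), patF_q1 F 26 3 (by omega) (by omega) (by omega) (by omega)]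
    decide
  have cw1 : (f 24 4).color = PColor.cW := by
    rw [hc 24 4 (by omega) (by omega), patF_q1 F 24 4 (by omega) (by omega) (by omega) (by omega)]
    decide
  have cg1 : (f 25 4).color = PColor.gate 1 := by
    rw [hc 25 4 (by omega) (by omega), patF_q1 F 25 4 (by omega) (by omega) (by omega) (by omega)]
    decide
  have sOu1 : (f 25 3).south = (f 25 2).north := hSo 25 2 (by omega) (by omega)
  have wOa1 : (f 25 3).west = (f 24 3).east := hWe 24 3 (by omega) (by omega)
  have wPO1 : (f 26 3).west = (f 25 3).east := hWe 25 3 (by omega) (by omega)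
  have sPb1 : (f 26 3).south = (f 26 2).north := hSo 26 2 (by omega) (by omega)
  have sgO1 : (f 25 4).south = (f 25 3).north := hSo 25 3 (by omega) (by omega)
  have wgw1 : (f 25 4).west = (f 24 4).east := hWe 24 4 (by omega) (by omega)
  have mO1 : f 25 3 ∈ U.filter (fun t => t.color = PColor.orC) :=
    Finset.mem_filter.mpr ⟨hfU 25 3 (by omega) (by omega), cO1⟩
  have cu2 : (f 30 2).color = PColor.upW 0 := by
    rw [hc 30 2 (by omega) (by omega), patF_q2 F 30 2 (by omega) (by omega) (by omega) (by omega)]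
    decide
  have ca2 : (f 29 3).color = PColor.arrW 1 := by
    rw [hc 29 3 (by omega) (by omega), patF_q2 F 29 3 (by omega) (by omega) (by omega) (by omega)]
    decide
  have cO2 : (f 30 3).color = PColor.orC := by
    rw [hc 30 3 (by omega) (by omega), patF_q2 F 30 3 (by omega) (by omega) (by omega) (by omega)]
    decide
  have cb2 : (f 31 2).color = PColor.bW := by
    rw [hc 31 2 (by omega) (by omega), patF_q2 F 31 2 (by omega) (by omega) (by omega) (by omega)]
    decide
  have cpm2 : (f 31 3).color = PColor.plus := by
    rw [hc 31 3 (by omega) (by omega), patF_q2 F 31 3 (by omega) (by omega) (by omega) (by omega)]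
    decide
  have cw2 : (f 29 4).color = PColor.cW := by
    rw [hc 29 4 (by omega) (by omega), patF_q2 F 29 4 (by omega) (by omega) (by omega) (by omega)]
    decide
  have cg2 : (f 30 4).color = PColor.gate 2 := by
    rw [hc 30 4 (by omega) (by omega), patF_q2 F 30 4 (by omega) (by omega) (by omega) (by omega)]
    decide
  have sOu2 : (f 30 3).south = (f 30 2).north := hSo 30 2 (by omega) (by omega)
  have wOa2 : (f 30 3).west = (f 29 3).east := hWe 29 3 (by omega) (by omega)
  have wPO2 : (f 31 3).west = (f 30 3).east := hWe 30 3 (by omega) (by omega)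
  have sPb2 : (f 31 3).south = (f 31 2).north := hSo 31 2 (by omega) (by omega)
  have sgO2 : (f 30 4).south = (f 30 3).north := hSo 30 3 (by omega) (by omega)
  have wgw2 : (f 30 4).west = (f 29 4).east := hWe 29 4 (by omega) (by omega)
  have mO2 : f 30 3 ∈ U.filter (fun t => t.color = PColor.orC) :=
    Finset.mem_filter.mpr ⟨hfU 30 3 (by omega) (by omega), cO2⟩
  have cu3 : (f 35 2).color = PColor.upW 1 := by
    rw [hc 35 2 (by omega) (by omega), patF_q3 F 35 2 (by omega) (by omega) (by omega) (by omega)]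
    decide
  have ca3 : (f 34 3).color = PColor.arrW 1 := by
    rw [hc 34 3 (by omega) (by omega), patF_q3 F 34 3 (by omega) (by omega) (by omega) (by omega)]
    decide
  have cO3 : (f 35 3).color = PColor.orC := by
    rw [hc 35 3 (by omega) (by omega), patF_q3 F 35 3 (by omega) (by omega) (by omega) (by omega)]
    decide
  have cb3 : (f 36 2).color = PColor.bW := by
    rw [hc 36 2 (by omega) (by omega), patF_q3 F 36 2 (by omega) (by omega) (by omega) (by omega)]
    decide
  have cpm3 : (f 36 3).color = PColor.plus := by
    rw [hc 36 3 (by omega) (by omega), patF_q3 F 36 3 (by omega) (by omega) (by omega) (by omega)]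
    decide
  have cw3 : (f 34 4).color = PColor.cW := by
    rw [hc 34 4 (by omega) (by omega), patF_q3 F 34 4 (by omega) (by omega) (by omega) (by omega)]
    decide
  have cg3 : (f 35 4).color = PColor.gate 3 := by
    rw [hc 35 4 (by omega) (by omega), patF_q3 F 35 4 (by omega) (by omega) (by omega) (by omega)]
    decide
  have sOu3 : (f 35 3).south = (f 35 2).north := hSo 35 2 (by omega) (by omega)
  have wOa3 : (f 35 3).west = (f 34 3).east := hWe 34 3 (by omega) (by omega)
  have wPO3 : (f 36 3).west = (f 35 3).east := hWe 35 3 (by omega) (by omega)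
  have sPb3 : (f 36 3).south = (f 36 2).north := hSo 36 2 (by omega) (by omega)
  have sgO3 : (f 35 4).south = (f 35 3).north := hSo 35 3 (by omega) (by omega)
  have wgw3 : (f 35 4).west = (f 34 4).east := hWe 34 4 (by omega) (by omega)
  have mO3 : f 35 3 ∈ U.filter (fun t => t.color = PColor.orC) :=
    Finset.mem_filter.mpr ⟨hfU 35 3 (by omega) (by omega), cO3⟩
  have hmemOr : PColor.orC ∈ U.image Tile.color :=
    Finset.mem_image.mpr ⟨f 20 3, hfU 20 3 (by omega) (by omega), cO0⟩
  have hA : UniqColor U PColor.bW → UniqColor U PColor.plus →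
      (f 20 3).east ≠ (f 25 3).east ∧ (f 20 3).east ≠ (f 30 3).east ∧
        (f 20 3).east ≠ (f 35 3).east := by
    intro hbW hplus
    refine ⟨?_, ?_, ?_⟩
    · intro he
      have hb : f 21 2 = f 26 2 :=
        hbW _ (hfU 21 2 (by omega) (by omega)) _ (hfU 26 2 (by omega) (by omega)) cb0 cb1
      have hpm : f 21 3 = f 26 3 :=
        hdetU _ (hfU 21 3 (by omega) (by omega)) _ (hfU 26 3 (by omega) (by omega))
          (by rw [sPb0, sPb1, hb]) (by rw [wPO0, wPO1, he])
      have hcc := congrArg Tile.color hpm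
      rw [cpm0, cpm1] at hcc
      exact absurd hcc (by decide)
    · intro he
      have hb : f 21 2 = f 31 2 :=
        hbW _ (hfU 21 2 (by omega) (by omega)) _ (hfU 31 2 (by omega) (by omega)) cb0 cb2
      have hpm : f 21 3 = f 31 3 :=
        hdetU _ (hfU 21 3 (by omega) (by omega)) _ (hfU 31 3 (by omega) (by omega))
          (by rw [sPb0, sPb2, hb]) (by rw [wPO0, wPO2, he])
      have hcc := congrArg Tile.color hpm
      rw [cpm0, cpm2] at hcc
      exact absurd hcc (by decide)
    · intro he
      have hb : f 21 2 = f 36 2 :=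
        hbW _ (hfU 21 2 (by omega) (by omega)) _ (hfU 36 2 (by omega) (by omega)) cb0 cb3
      have hpm : f 21 3 = f 36 3 :=
        hdetU _ (hfU 21 3 (by omega) (by omega)) _ (hfU 36 3 (by omega) (by omega))
          (by rw [sPb0, sPb3, hb]) (by rw [wPO0, wPO3, he])
      have hcc := congrArg Tile.color hpm
      rw [cpm0, cpm3] at hcc
      exact absurd hcc (by decide)
  have hB : UniqColor U (PColor.upW 0) → UniqColor U (PColor.upW 1) →
      UniqColor U (PColor.arrW 0) → UniqColor U (PColor.arrW 1) →
      (f 20 3).south = (f 30 3).south ∧ (f 25 3).south = (f 35 3).south ∧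
        (f 20 3).west = (f 25 3).west ∧ (f 30 3).west = (f 35 3).west := by
    intro h0 h1 h2 h3
    refine ⟨?_, ?_, ?_, ?_⟩
    · rw [sOu0, sOu2, h0 _ (hfU 20 2 (by omega) (by omega)) _ (hfU 30 2 (by omega) (by omega)) cu0 cu2]
    · rw [sOu1, sOu3, h1 _ (hfU 25 2 (by omega) (by omega)) _ (hfU 35 2 (by omega) (by omega)) cu1 cu3]
    · rw [wOa0, wOa1, h2 _ (hfU 19 3 (by omega) (by omega)) _ (hfU 24 3 (by omega) (by omega)) ca0 ca1]
    · rw [wOa2, wOa3, h3 _ (hfU 29 3 (by omega) (by omega)) _ (hfU 34 3 (by omega) (by omega)) ca2 ca3]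
  have hCC : UniqColor U PColor.cW →
      (f 20 3 ≠ f 25 3 ∧ f 20 3 ≠ f 30 3 ∧ f 20 3 ≠ f 35 3 ∧
        f 25 3 ≠ f 30 3 ∧ f 25 3 ≠ f 35 3 ∧ f 30 3 ≠ f 35 3) := by
    intro hcW
    refine ⟨?_, ?_, ?_, ?_, ?_, ?_⟩
    · intro h
      have hg : f 20 4 = f 25 4 := by
        apply hdetU _ (hfU 20 4 (by omega) (by omega)) _ (hfU 25 4 (by omega) (by omega))
        · rw [sgO0, sgO1, h]
        · rw [wgw0, wgw1,
            hcW _ (hfU 19 4 (by omega) (by omega)) _ (hfU 24 4 (by omega) (by omega)) cw0 cw1]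
      have hcc := congrArg Tile.color hg
      rw [cg0, cg1] at hcc
      exact absurd hcc (by decide)
    · intro h
      have hg : f 20 4 = f 30 4 := by
        apply hdetU _ (hfU 20 4 (by omega) (by omega)) _ (hfU 30 4 (by omega) (by omega))
        · rw [sgO0, sgO2, h]
        · rw [wgw0, wgw2,
            hcW _ (hfU 19 4 (by omega) (by omega)) _ (hfU 29 4 (by omega) (by omega)) cw0 cw2]
      have hcc := congrArg Tile.color hg
      rw [cg0, cg2] at hcc
      exact absurd hcc (by decide)
    · intro h
      have hg : f 20 4 = f 35 4 := by
        apply hdetU _ (hfU 20 4 (by omega) (by omega)) _ (hfU 35 4 (by omega) (by omega))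
        · rw [sgO0, sgO3, h]
        · rw [wgw0, wgw3,
            hcW _ (hfU 19 4 (by omega) (by omega)) _ (hfU 34 4 (by omega) (by omega)) cw0 cw3]
      have hcc := congrArg Tile.color hg
      rw [cg0, cg3] at hcc
      exact absurd hcc (by decide)
    · intro h
      have hg : f 25 4 = f 30 4 := by
        apply hdetU _ (hfU 25 4 (by omega) (by omega)) _ (hfU 30 4 (by omega) (by omega))
        · rw [sgO1, sgO2, h]
        · rw [wgw1, wgw2,
            hcW _ (hfU 24 4 (by omega) (by omega)) _ (hfU 29 4 (by omega) (by omega)) cw1 cw2]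
      have hcc := congrArg Tile.color hg
      rw [cg1, cg2] at hcc
      exact absurd hcc (by decide)
    · intro h
      have hg : f 25 4 = f 35 4 := by
        apply hdetU _ (hfU 25 4 (by omega) (by omega)) _ (hfU 35 4 (by omega) (by omega))
        · rw [sgO1, sgO3, h]
        · rw [wgw1, wgw3,
            hcW _ (hfU 24 4 (by omega) (by omega)) _ (hfU 34 4 (by omega) (by omega)) cw1 cw3]
      have hcc := congrArg Tile.color hg
      rw [cg1, cg3] at hcc
      exact absurd hcc (by decide)
    · intro h
      have hg : f 30 4 = f 35 4 := by
        apply hdetU _ (hfU 30 4 (by omega) (by omega)) _ (hfU 35 4 (by omega) (by omega))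
        · rw [sgO2, sgO3, h]
        · rw [wgw2, wgw3,
            hcW _ (hfU 29 4 (by omega) (by omega)) _ (hfU 34 4 (by omega) (by omega)) cw2 cw3]
      have hcc := congrArg Tile.color hg
      rw [cg2, cg3] at hcc
      exact absurd hcc (by decide)
  have hcontra : UniqColor U (PColor.upW 0) → UniqColor U (PColor.upW 1) →
      UniqColor U (PColor.arrW 0) → UniqColor U (PColor.arrW 1) →
      UniqColor U PColor.bW → UniqColor U PColor.plus →
      (U.filter (fun t => t.color = PColor.orC)).card ≠ 3 := by
    intro hu0 hu1 ha0 ha1 hbW hplus hk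
    obtain ⟨hS02, hS13, hW01, hW23⟩ := hB hu0 hu1 ha0 ha1
    obtain ⟨hE1, hE2, hE3⟩ := hA hbW hplus
    have hne01 : f 20 3 ≠ f 25 3 := fun h => hE1 (by rw [h])
    have hne02 : f 20 3 ≠ f 30 3 := fun h => hE2 (by rw [h])
    have hne03 : f 20 3 ≠ f 35 3 := fun h => hE3 (by rw [h])
    have hmain : f 25 3 = f 30 3 ∨ f 25 3 = f 35 3 ∨ f 30 3 = f 35 3 := by
      by_contra hno
      push_neg at hno
      have := hcard4 _ _ _ _ mO0 mO1 mO2 mO3 hne01 hne02 hne03 hno.1 hno.2.1 hno.2.2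
      omega
    rcases hmain with h | h | h
    · refine hE3 ?_
      rw [hdetU _ (hfU 20 3 (by omega) (by omega)) _ (hfU 35 3 (by omega) (by omega))
        (by rw [hS02, ← h, hS13]) (by rw [hW01, h, hW23])]
    · refine hE2 ?_
      rw [hdetU _ (hfU 20 3 (by omega) (by omega)) _ (hfU 30 3 (by omega) (by omega))
        (by rw [hS02]) (by rw [hW01, h, ← hW23])]
    · refine hE1 ?_
      rw [hdetU _ (hfU 20 3 (by omega) (by omega)) _ (hfU 25 3 (by omega) (by omega))
        (by rw [hS02, h, ← hS13]) (by rw [hW01])]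
  have h4 : 4 ≤ (U.filter (fun t => t.color = PColor.orC)).card := by
    by_contra h4n
    push_neg at h4n
    have hk3 : (U.filter (fun t => t.color = PColor.orC)).card = 3 := by omega
    by_cases hcW : UniqColor U PColor.cW
    · obtain ⟨d1, d2, d3, d4, d5, d6⟩ := hCC hcW
      have := hcard4 _ _ _ _ mO0 mO1 mO2 mO3 d1 d2 d3 d4 d5 d6
      omega
    · have h2w : 2 ≤ (U.filter (fun s => s.color = PColor.cW)).card := by
        unfold UniqColor at hcW
        push_neg at hcW
        obtain ⟨t, ht, t', ht', hct, hct', hne⟩ := hcW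
        exact hpair _ t t' ht ht' hct hct' hne
      have huniqc : ∀ c : PColor, c ≠ PColor.orC → c ≠ PColor.cW → UniqColor U c := by
        intro c hc1 hc2 t ht t' ht' hct hct'
        by_contra hne
        have h2c := hpair c t t' ht ht' hct hct' hne
        have hmemcW : PColor.cW ∈ U.image Tile.color :=
          Finset.mem_image.mpr ⟨f 19 4, hfU 19 4 (by omega) (by omega), cw0⟩
        have hmemc : c ∈ U.image Tile.color := Finset.mem_image.mpr ⟨t, ht, hct⟩
        have hS3 : ({PColor.orC, PColor.cW, c} : Finset PColor) ⊆ U.image Tile.color := by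
          intro d hd
          simp only [Finset.mem_insert, Finset.mem_singleton] at hd
          rcases hd with rfl | rfl | rfl <;> assumption
        have hsl := hslack _ hS3
        rw [Finset.sum_insert (by
            simp only [Finset.mem_insert, Finset.mem_singleton]
            push_neg
            exact ⟨by decide, Ne.symm hc1⟩),
          Finset.sum_insert (by
            simp only [Finset.mem_singleton]
            exact Ne.symm hc2),
          Finset.sum_singleton] at hsl
        have hle3 : ({PColor.orC, PColor.cW, c} : Finset PColor).card ≤ 3 := by
          calc ({PColor.orC, PColor.cW, c} : Finset PColor).card
              ≤ ({PColor.cW, c} : Finset PColor).card + 1 := Finset.card_insert_le _ _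
          _ ≤ (({c} : Finset PColor).card + 1) + 1 := by
              have := Finset.card_insert_le PColor.cW ({c} : Finset PColor)
              omega
          _ ≤ 3 := by simp
        omega
      exact hcontra (huniqc _ (by decide) (by decide)) (huniqc _ (by decide) (by decide))
        (huniqc _ (by decide) (by decide)) (huniqc _ (by decide) (by decide))
        (huniqc _ (by decide) (by decide)) (huniqc _ (by decide) (by decide)) hk3
  have huniq1 : ∀ c : PColor, c ≠ PColor.orC → UniqColor U c := by
    intro c hc1 t ht t' ht' hct hct'
    by_contra hne
    have h2c := hpair c t t' ht ht' hct hct' hne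
    have hmemc : c ∈ U.image Tile.color := Finset.mem_image.mpr ⟨t, ht, hct⟩
    have hS2 : ({PColor.orC, c} : Finset PColor) ⊆ U.image Tile.color := by
      intro d hd
      simp only [Finset.mem_insert, Finset.mem_singleton] at hd
      rcases hd with rfl | rfl <;> assumption
    have hsl := hslack _ hS2
    rw [Finset.sum_pair (Ne.symm hc1)] at hsl
    have hle2 : ({PColor.orC, c} : Finset PColor).card ≤ 2 := by
      calc ({PColor.orC, c} : Finset PColor).card
          ≤ ({c} : Finset PColor).card + 1 := Finset.card_insert_le _ _
      _ ≤ 2 := by simp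
    omega
  obtain ⟨d1, d2, d3, d4, d5, d6⟩ := hCC (huniq1 _ (by decide))
  obtain ⟨hS02, hS13, hW01, hW23⟩ := hB (huniq1 _ (by decide)) (huniq1 _ (by decide))
    (huniq1 _ (by decide)) (huniq1 _ (by decide))
  have hfib4 : (U.filter (fun t => t.color = PColor.orC)).card = 4 := by
    have hsl := hslack {PColor.orC} (by
      intro d hd
      simp only [Finset.mem_singleton] at hd
      subst hd
      exact hmemOr)
    rw [Finset.sum_singleton] at hsl
    simp only [Finset.card_singleton] at hsl
    omega
  have hfibeq : ({f 20 3, f 25 3, f 30 3, f 35 3} : Finset (Tile PColor G))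
      = U.filter (fun t => t.color = PColor.orC) := by
    apply Finset.eq_of_subset_of_card_le
    · intro t ht
      simp only [Finset.mem_insert, Finset.mem_singleton] at ht
      rcases ht with rfl | rfl | rfl | rfl
      exacts [mO0, mO1, mO2, mO3]
    · rw [hfib4, Finset.card_insert_of_notMem (by simp [d1, d2, d3]),
        Finset.card_insert_of_notMem (by simp [d4, d5]),
        Finset.card_insert_of_notMem (by simp [d6]), Finset.card_singleton]
  have hTU : U = T.tiles := by
    apply Finset.eq_of_subset_of_card_le hUsub
    calc T.tiles.card ≤ (colorsOf (widthF F) 6 (patF F)).card + 3 := hcard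
    _ = (U.image Tile.color).card + 3 := by rw [hcolU]
    _ ≤ U.card := card_image_add_le U Tile.color PColor.orC hmemOr h4
  have hORsouth : ∀ t ∈ U, t.color = PColor.orC →
      t.south = (f 20 2).north ∨ t.south = (f 25 2).north := by
    intro t ht hct
    have hmem4 : t ∈ ({f 20 3, f 25 3, f 30 3, f 35 3} : Finset (Tile PColor G)) := by
      rw [hfibeq]
      exact Finset.mem_filter.mpr ⟨ht, hct⟩
    simp only [Finset.mem_insert, Finset.mem_singleton] at hmem4
    rcases hmem4 with rfl | rfl | rfl | rfl
    · left; exact sOu0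
    · right; exact sOu1
    · left
      rw [sOu2, huniq1 (PColor.upW 0) (by decide) _ (hfU 30 2 (by omega) (by omega))
        _ (hfU 20 2 (by omega) (by omega)) cu2 cu0]
    · right
      rw [sOu3, huniq1 (PColor.upW 1) (by decide) _ (hfU 35 2 (by omega) (by omega))
        _ (hfU 25 2 (by omega) (by omega)) cu3 cu1]
  have hzo : (f 20 2).north ≠ (f 25 2).north := by
    intro h
    apply d1
    exact hdetU _ (hfU 20 3 (by omega) (by omega)) _ (hfU 25 3 (by omega) (by omega))
      (by rw [sOu0, sOu1, h]) hW01
  refine ⟨(f 20 2).north, (f 25 2).north, hzo, ?_, ?_, ?_, ?_⟩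
  · intro t ht hct
    exact hORsouth t (by rw [hTU]; exact ht) hct
  · exact ⟨f 20 3, hUsub (hfU 20 3 (by omega) (by omega)), cO0, sOu0⟩
  · exact ⟨f 25 3, hUsub (hfU 25 3 (by omega) (by omega)), cO1, sOu1⟩
  intro v hv
  have hvx : 45 + 11*v + 8 < widthF F := by unfold widthF; omega
  have ctp : (f (45+11*v+1) 1).color = PColor.varW v := by
    rw [hc (45+11*v+1) 1 (by omega) (by omega),
      patF_r1 F v hv (45+11*v+1) 1 (by omega) (by omega) (by omega) (by omega),
      show (45+11*v+1) - (45+11*v) = 1 from by omega]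
    rfl
  have cta1 : (f (45+11*v) 2).color = PColor.varAux v := by
    rw [hc (45+11*v) 2 (by omega) (by omega),
      patF_r1 F v hv (45+11*v) 2 (by omega) (by omega) (by omega) (by omega),
      show (45+11*v) - (45+11*v) = 0 from by omega]
    rfl
  have ctm : (f (45+11*v+1) 2).color = PColor.varMod v := by
    rw [hc (45+11*v+1) 2 (by omega) (by omega),
      patF_r1 F v hv (45+11*v+1) 2 (by omega) (by omega) (by omega) (by omega),
      show (45+11*v+1) - (45+11*v) = 1 from by omega]
    rfl
  have ctn : (f (45+11*v+4) 1).color = PColor.negW v := by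
    rw [hc (45+11*v+4) 1 (by omega) (by omega),
      patF_r2 F v hv (45+11*v+4) 1 (by omega) (by omega) (by omega) (by omega),
      show (45+11*v+4) - (48+11*v) = 1 from by omega]
    rfl
  have cta2 : (f (45+11*v+3) 2).color = PColor.varAux v := by
    rw [hc (45+11*v+3) 2 (by omega) (by omega),
      patF_r2 F v hv (45+11*v+3) 2 (by omega) (by omega) (by omega) (by omega),
      show (45+11*v+3) - (48+11*v) = 0 from by omega]
    rfl
  have ctmm : (f (45+11*v+4) 2).color = PColor.varModd v := by
    rw [hc (45+11*v+4) 2 (by omega) (by omega),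
      patF_r2 F v hv (45+11*v+4) 2 (by omega) (by omega) (by omega) (by omega),
      show (45+11*v+4) - (48+11*v) = 1 from by omega]
    rfl
  have ctpp : (f (45+11*v+7) 1).color = PColor.varW v := by
    rw [hc (45+11*v+7) 1 (by omega) (by omega),
      patF_r3 F v hv (45+11*v+7) 1 (by omega) (by omega) (by omega) (by omega),
      show (45+11*v+7) - (51+11*v) = 1 from by omega]
    rfl
  have ctnn : (f (45+11*v+8) 1).color = PColor.negW v := by
    rw [hc (45+11*v+8) 1 (by omega) (by omega),
      patF_r3 F v hv (45+11*v+8) 1 (by omega) (by omega) (by omega) (by omega),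
      show (45+11*v+8) - (51+11*v) = 2 from by omega]
    rfl
  have cOp : (f (45+11*v+7) 2).color = PColor.orC := by
    rw [hc (45+11*v+7) 2 (by omega) (by omega),
      patF_r3 F v hv (45+11*v+7) 2 (by omega) (by omega) (by omega) (by omega),
      show (45+11*v+7) - (51+11*v) = 1 from by omega]
    rfl
  have cOn : (f (45+11*v+8) 2).color = PColor.orC := by
    rw [hc (45+11*v+8) 2 (by omega) (by omega),
      patF_r3 F v hv (45+11*v+8) 2 (by omega) (by omega) (by omega) (by omega),
      show (45+11*v+8) - (51+11*v) = 2 from by omega]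
    rfl
  have stm : (f (45+11*v+1) 2).south = (f (45+11*v+1) 1).north :=
    hSo (45+11*v+1) 1 (by omega) (by omega)
  have wtm : (f (45+11*v+1) 2).west = (f (45+11*v) 2).east := by
    have h := hWe (45+11*v) 2 (by omega) (by omega)
    rwa [show 45+11*v+1 = 45+11*v+1 from rfl] at h
  have stmm : (f (45+11*v+4) 2).south = (f (45+11*v+4) 1).north :=
    hSo (45+11*v+4) 1 (by omega) (by omega)
  have wtmm : (f (45+11*v+4) 2).west = (f (45+11*v+3) 2).east := by
    have h := hWe (45+11*v+3) 2 (by omega) (by omega)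
    rwa [show 45+11*v+3+1 = 45+11*v+4 from by omega] at h
  have sOp : (f (45+11*v+7) 2).south = (f (45+11*v+7) 1).north :=
    hSo (45+11*v+7) 1 (by omega) (by omega)
  have sOn : (f (45+11*v+8) 2).south = (f (45+11*v+8) 1).north :=
    hSo (45+11*v+8) 1 (by omega) (by omega)
  have hta : f (45+11*v+3) 2 = f (45+11*v) 2 :=
    huniq1 (PColor.varAux v) (by simp) _ (hfU _ _ (by omega) (by omega))
      _ (hfU _ _ (by omega) (by omega)) cta2 cta1
  have htpp : f (45+11*v+7) 1 = f (45+11*v+1) 1 :=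
    huniq1 (PColor.varW v) (by simp) _ (hfU _ _ (by omega) (by omega))
      _ (hfU _ _ (by omega) (by omega)) ctpp ctp
  have htnn : f (45+11*v+8) 1 = f (45+11*v+4) 1 :=
    huniq1 (PColor.negW v) (by simp) _ (hfU _ _ (by omega) (by omega))
      _ (hfU _ _ (by omega) (by omega)) ctnn ctn
  have hnn : (f (45+11*v+1) 1).north ≠ (f (45+11*v+4) 1).north := by
    intro h
    have heq : f (45+11*v+1) 2 = f (45+11*v+4) 2 :=
      hdetU _ (hfU _ _ (by omega) (by omega)) _ (hfU _ _ (by omega) (by omega))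
        (by rw [stm, stmm, h]) (by rw [wtm, wtmm, hta])
    have hcc := congrArg Tile.color heq
    rw [ctm, ctmm] at hcc
    simp at hcc
  have hpn := hORsouth _ (hfU (45+11*v+7) 2 (by omega) (by omega)) cOp
  rw [sOp, htpp] at hpn
  have hqn := hORsouth _ (hfU (45+11*v+8) 2 (by omega) (by omega)) cOn
  rw [sOn, htnn] at hqn
  refine ⟨f (45+11*v+1) 1, f (45+11*v+4) 1,
    hUsub (hfU _ _ (by omega) (by omega)), ctp, ?_,
    hUsub (hfU _ _ (by omega) (by omega)), ctn, ?_, ?_⟩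
  · intro t ht hct
    exact huniq1 (PColor.varW v) (by simp) t (by rw [hTU]; exact ht)
      _ (hfU _ _ (by omega) (by omega)) hct ctp
  · intro t ht hct
    exact huniq1 (PColor.negW v) (by simp) t (by rw [hTU]; exact ht)
      _ (hfU _ _ (by omega) (by omega)) hct ctn
  · rcases hpn with h | h <;> rcases hqn with h' | h'
    · exact absurd (h.trans h'.symm) hnn
    · exact Or.inr ⟨h, h'⟩
    · exact Or.inl ⟨h, h'⟩
    · exact absurd (h.trans h'.symm) hnn
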